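/- Let f : ℂⁿ → ℂ be a holomorphic weighted homogeneous polynomial: there are positive integers p₁,…,pₙ and a positive integer d with f(r^{p₁}z₁,…,r^{pₙ}zₙ) = r^d f(z) for all r > 0 and z ∈ ℂⁿ. Assume that for every nonempty I ⊆ {1,…,n} there is no point z with z_j ≠ 0 for j ∈ I, z_j = 0 for j ∉ I, and (∂f/∂z_j)(z) = 0 for all j ∈ I. Let a > b ≥ 1 be integers, φ_{a,b}(w) = (w₁^a conj(w₁)^b, …, wₙ^a conj(wₙ)^b), and g = f ∘ φ_{a,b}. Then C(w) = Σ_{1≤j<k≤n} C_{j,k}(w) > 0 for every w ≠ 0 with g(w) = 0, where C_{j,k}(w) = |conj(w_j) g_{w_k}(w) − conj(w_k) g_{w_j}(w)|² − |w_j g_{w̄_k}(w) − w_k g_{w̄_j}(w)|²; i.e., g is strictly holomorphic-like on all of ℂⁿ. -/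

import Mathlib

open Complex ComplexConjugate

/-- The Wirtinger derivative `∂g/∂w_j` of a real-differentiable map `g : ℂⁿ → ℂ`. -/
noncomputable def wdz {n : ℕ} (g : (Fin n → ℂ) → ℂ) (z : Fin n → ℂ) (j : Fin n) : ℂ :=
  (1 / 2 : ℂ) * (fderiv ℝ g z (Pi.single j 1) - Complex.I * fderiv ℝ g z (Pi.single j Complex.I))

/-- The Wirtinger derivative `∂g/∂w̄_j` of a real-differentiable map `g : ℂⁿ → ℂ`. -/
noncomputable def wdzbar {n : ℕ} (g : (Fin n → ℂ) → ℂ) (z : Fin n → ℂ) (j : Fin n) : ℂ :=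
  (1 / 2 : ℂ) * (fderiv ℝ g z (Pi.single j 1) + Complex.I * fderiv ℝ g z (Pi.single j Complex.I))

/-- The homogeneous mixed covering `φ_{a,b}(w) = (w₁^a conj(w₁)^b, …, wₙ^a conj(wₙ)^b)`. -/
noncomputable def phiab {n : ℕ} (a b : ℕ) (w : Fin n → ℂ) : Fin n → ℂ :=
  fun j => w j ^ a * conj (w j) ^ b

/-- The quantity `C_{j,k}` of a real-differentiable mixed function `g`. -/
noncomputable def Cjk {n : ℕ} (g : (Fin n → ℂ) → ℂ) (w : Fin n → ℂ) (j k : Fin n) : ℝ :=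
  ‖conj (w j) * wdz g w k - conj (w k) * wdz g w j‖ ^ 2
    - ‖w j * wdzbar g w k - w k * wdzbar g w j‖ ^ 2

/-- real derivative of `v ↦ v^a * conj v ^ b` at `u`. -/
noncomputable def Dab (a b : ℕ) (u : ℂ) : ℂ →L[ℝ] ℂ :=
  u ^ a • ((((1 : ℂ →L[ℂ] ℂ).smulRight ((b : ℂ) * conj u ^ (b - 1))).restrictScalars ℝ).comp
      Complex.conjCLE.toContinuousLinearMap)
   + conj u ^ b • (((1 : ℂ →L[ℂ] ℂ).smulRight ((a : ℂ) * u ^ (a - 1))).restrictScalars ℝ)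

lemma Dab_apply (a b : ℕ) (u c : ℂ) :
    Dab a b u c = (a : ℂ) * u ^ (a - 1) * conj u ^ b * c
      + (b : ℂ) * u ^ a * conj u ^ (b - 1) * conj c := by
  simp [Dab, ContinuousLinearMap.smulRight_apply]
  ring

lemma hasFDerivAt_psi (a b : ℕ) (u : ℂ) :
    HasFDerivAt (fun v : ℂ => v ^ a * conj v ^ b) (Dab a b u) u := by
  have h1 : HasFDerivAt (fun v : ℂ => v ^ a)
      (((1 : ℂ →L[ℂ] ℂ).smulRight ((a : ℂ) * u ^ (a - 1))).restrictScalars ℝ) u :=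
    ((hasDerivAt_pow a u).hasFDerivAt).restrictScalars ℝ
  have hc : HasFDerivAt (fun v : ℂ => conj v)
      Complex.conjCLE.toContinuousLinearMap u :=
    Complex.conjCLE.toContinuousLinearMap.hasFDerivAt
  have h2 : HasFDerivAt (fun v : ℂ => conj v ^ b)
      ((((1 : ℂ →L[ℂ] ℂ).smulRight ((b : ℂ) * conj u ^ (b - 1))).restrictScalars ℝ).comp
        Complex.conjCLE.toContinuousLinearMap) u :=
    (((hasDerivAt_pow b (conj u)).hasFDerivAt).restrictScalars ℝ).comp u hc
  exact h1.mul h2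

lemma hasFDerivAt_phiab {n : ℕ} (a b : ℕ) (w : Fin n → ℂ) :
    HasFDerivAt (phiab a b (n := n))
      (ContinuousLinearMap.pi fun k => (Dab a b (w k)).comp (ContinuousLinearMap.proj k)) w := by
  apply hasFDerivAt_pi.mpr
  intro k
  exact (hasFDerivAt_psi a b (w k)).comp w (ContinuousLinearMap.proj (R := ℝ) (φ := fun _ : Fin n => ℂ) k).hasFDerivAt

lemma gderiv_single {n : ℕ} (a b : ℕ) (f : (Fin n → ℂ) → ℂ) (hf : Differentiable ℂ f)
    (w : Fin n → ℂ) (j : Fin n) (c : ℂ) :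
    fderiv ℝ (fun w => f (phiab a b w)) w (Pi.single j c)
      = ((a : ℂ) * (w j) ^ (a - 1) * (conj (w j)) ^ b * c
          + (b : ℂ) * (w j) ^ a * (conj (w j)) ^ (b - 1) * conj c)
          * fderiv ℂ f (phiab a b w) (Pi.single j 1) := by
  classical
  have hg : HasFDerivAt (fun w => f (phiab a b w))
      (((fderiv ℂ f (phiab a b w)).restrictScalars ℝ).comp
        (ContinuousLinearMap.pi fun k => (Dab a b (w k)).comp (ContinuousLinearMap.proj k))) w :=
    ((hf (phiab a b w)).hasFDerivAt.restrictScalars ℝ).comp w (hasFDerivAt_phiab a b w)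
  rw [hg.fderiv]
  have h1 : (ContinuousLinearMap.pi fun k => (Dab a b (w k)).comp (ContinuousLinearMap.proj k))
      (Pi.single j c) = Pi.single j (Dab a b (w j) c) := by
    funext k
    by_cases hk : k = j
    · subst hk; simp
    · simp [Pi.single_eq_of_ne hk]
  have h2 : (Pi.single j (Dab a b (w j) c) : Fin n → ℂ)
      = (Dab a b (w j) c) • (Pi.single j (1 : ℂ) : Fin n → ℂ) := by
    funext k
    by_cases hk : k = j
    · subst hk; simp
    · simp [Pi.single_eq_of_ne hk]
  rw [ContinuousLinearMap.comp_apply, h1, h2]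
  rw [show ((fderiv ℂ f (phiab a b w)).restrictScalars ℝ)
      ((Dab a b (w j)) c • (Pi.single j (1 : ℂ) : Fin n → ℂ))
      = (Dab a b (w j)) c • (fderiv ℂ f (phiab a b w)) (Pi.single j (1 : ℂ)) from
    (fderiv ℂ f (phiab a b w)).map_smul _ _]
  rw [Dab_apply, smul_eq_mul]









lemma single_smul_one {n : ℕ} (j : Fin n) (u : ℂ) :
    (Pi.single j u : Fin n → ℂ) = u • (Pi.single j 1 : Fin n → ℂ) := by
  funext k
  by_cases hk : k = j
  · subst hk; simp
  · simp [Pi.single_eq_of_ne hk]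

lemma euler {n : ℕ} (f : (Fin n → ℂ) → ℂ) (hf : Differentiable ℂ f)
    (p : Fin n → ℕ) (d : ℕ)
    (hhom : ∀ r : ℝ, 0 < r → ∀ z : Fin n → ℂ,
      f (fun j => ((r ^ (p j) : ℝ) : ℂ) * z j) = ((r ^ d : ℝ) : ℂ) * f z)
    (z : Fin n → ℂ) :
    ∑ j, (p j : ℂ) * z j * fderiv ℂ f z (Pi.single j 1) = (d : ℂ) * f z := by
  classical
  have hpow : ∀ m : ℕ, HasDerivAt (fun r : ℝ => (r : ℂ) ^ m) (m : ℂ) 1 := by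
    intro m
    have h0 : HasDerivAt (fun r : ℝ => (r : ℂ)) 1 (1 : ℝ) := by
      exact (hasDerivAt_id (1 : ℝ)).ofReal_comp
    have h2 : HasFDerivAt (fun w : ℂ => w ^ m)
        (((1 : ℂ →L[ℂ] ℂ).smulRight ((m : ℂ) * (1 : ℂ) ^ (m - 1))).restrictScalars ℝ)
        (((1 : ℝ) : ℂ)) := by
      exact ((hasDerivAt_pow m (((1 : ℝ) : ℂ))).hasFDerivAt).restrictScalars ℝ
    have h3 := h2.comp_hasDerivAt 1 h0
    exact h3.congr_deriv (by simp)
  have hc : HasDerivAt (fun r : ℝ => (fun j => ((r : ℂ) ^ (p j)) * z j : Fin n → ℂ))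
      (fun j => (p j : ℂ) * z j) 1 := by
    rw [hasDerivAt_pi]
    intro j
    simpa using (hpow (p j)).mul_const (z j)
  have hz1 : (fun j => (((1 : ℝ) : ℂ)) ^ (p j) * z j : Fin n → ℂ) = z := by
    funext j; simp
  have hL : HasFDerivAt f ((fderiv ℂ f z).restrictScalars ℝ)
      (fun j => (((1 : ℝ) : ℂ)) ^ (p j) * z j : Fin n → ℂ) := by
    rw [hz1]; exact (hf z).hasFDerivAt.restrictScalars ℝ
  have key : HasDerivAt (fun r : ℝ => f (fun j => ((r : ℂ) ^ (p j)) * z j))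
      (((fderiv ℂ f z).restrictScalars ℝ) (fun j => (p j : ℂ) * z j)) 1 :=
    hL.comp_hasDerivAt 1 hc
  have key2 : HasDerivAt (fun r : ℝ => ((r : ℂ)) ^ d * f z) ((d : ℂ) * f z) 1 := by
    simpa using (hpow d).mul_const (f z)
  have heq : (fun r : ℝ => ((r : ℂ)) ^ d * f z)
      =ᶠ[nhds (1 : ℝ)] (fun r : ℝ => f (fun j => ((r : ℂ) ^ (p j)) * z j)) := by
    filter_upwards [eventually_gt_nhds (by norm_num : (0 : ℝ) < 1)] with r hr
    have h := hhom r hr z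
    push_cast at h
    exact h.symm
  have key2' : HasDerivAt (fun r : ℝ => f (fun j => ((r : ℂ) ^ (p j)) * z j))
      ((d : ℂ) * f z) 1 := key2.congr_of_eventuallyEq heq.symm
  have huniq := key.unique key2'
  rw [← huniq]
  have hv : (fun j => (p j : ℂ) * z j : Fin n → ℂ)
      = ∑ j, Pi.single j ((p j : ℂ) * z j) := (Finset.univ_sum_single _).symm
  rw [hv, map_sum]
  refine Finset.sum_congr rfl fun j _ => ?_
  conv_rhs => rw [single_smul_one j ((p j : ℂ) * z j)]
  rw [show (ContinuousLinearMap.restrictScalars ℝ (fderiv ℂ f z))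
        (((p j : ℂ) * z j) • (Pi.single j 1 : Fin n → ℂ))
      = ((p j : ℂ) * z j) • (fderiv ℂ f z) (Pi.single j 1) from
    (fderiv ℂ f z).map_smul _ _, smul_eq_mul]

lemma wirtinger_half1 (A B Fv : ℂ) :
    (1 / 2 : ℂ) * ((A * 1 + B * conj 1) * Fv
      - Complex.I * ((A * Complex.I + B * conj Complex.I) * Fv)) = A * Fv := by
  simp only [map_one, Complex.conj_I, mul_one]
  linear_combination (-(1 / 2 : ℂ) * (A - B) * Fv) * Complex.I_sq

lemma wirtinger_half2 (A B Fv : ℂ) :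
    (1 / 2 : ℂ) * ((A * 1 + B * conj 1) * Fv
      + Complex.I * ((A * Complex.I + B * conj Complex.I) * Fv)) = B * Fv := by
  simp only [map_one, Complex.conj_I, mul_one]
  linear_combination ((1 / 2 : ℂ) * (A - B) * Fv) * Complex.I_sq

/-- If `f` is a holomorphic weighted homogeneous (polynomial) function whose
restriction to each coordinate subspace has no critical point on the corresponding
torus, then `g = f ∘ φ_{a,b}` (with `a > b ≥ 1`) is strictly holomorphic-like on
all of `ℂⁿ`: `C(w) = Σ_{j<k} C_{j,k}(w) > 0` at every nonzero point of `g⁻¹(0)`. -/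
theorem weighted_homogeneous_pullback_strictly_holomorphic_like (n : ℕ)
    (f : (Fin n → ℂ) → ℂ) (hf : Differentiable ℂ f)
    (p : Fin n → ℕ) (hp : ∀ j, 0 < p j) (d : ℕ) (hd : 0 < d)
    (hhom : ∀ r : ℝ, 0 < r → ∀ z : Fin n → ℂ,
      f (fun j => ((r ^ (p j) : ℝ) : ℂ) * z j) = ((r ^ d : ℝ) : ℂ) * f z)
    (hcrit : ∀ I : Finset (Fin n), I.Nonempty →
      ¬∃ z : Fin n → ℂ, (∀ j ∈ I, z j ≠ 0) ∧ (∀ j ∉ I, z j = 0) ∧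
        (∀ j ∈ I, fderiv ℂ f z (Pi.single j 1) = 0))
    (a b : ℕ) (hb : 1 ≤ b) (hab : b < a) :
    ∀ w : Fin n → ℂ, w ≠ 0 → f (phiab a b w) = 0 →
      0 < ∑ j : Fin n, ∑ k : Fin n,
            if j < k then Cjk (fun w => f (phiab a b w)) w j k else 0 := by
  obtain ⟨a', rfl⟩ : ∃ a', a = a' + 2 := ⟨a - 2, by omega⟩
  obtain ⟨b', rfl⟩ : ∃ b', b = b' + 1 := ⟨b - 1, by omega⟩
  intro w hw hgw
  classical
  have hwdz : ∀ j, wdz (fun w => f (phiab (a' + 2) (b' + 1) w)) w j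
      = ((a' + 2 : ℕ) : ℂ) * w j ^ (a' + 1) * conj (w j) ^ (b' + 1) * fderiv ℂ f (phiab (a' + 2) (b' + 1) w) (Pi.single j 1) := by
    intro j
    unfold wdz
    rw [gderiv_single (a' + 2) (b' + 1) f hf w j 1,
      gderiv_single (a' + 2) (b' + 1) f hf w j Complex.I,
      show a' + 2 - 1 = a' + 1 from rfl, show b' + 1 - 1 = b' from rfl]
    exact wirtinger_half1 _ _ _
  have hwdzbar : ∀ j, wdzbar (fun w => f (phiab (a' + 2) (b' + 1) w)) w j
      = ((b' + 1 : ℕ) : ℂ) * w j ^ (a' + 2) * conj (w j) ^ b' * fderiv ℂ f (phiab (a' + 2) (b' + 1) w) (Pi.single j 1) := by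
    intro j
    unfold wdzbar
    rw [gderiv_single (a' + 2) (b' + 1) f hf w j 1,
      gderiv_single (a' + 2) (b' + 1) f hf w j Complex.I,
      show a' + 2 - 1 = a' + 1 from rfl, show b' + 1 - 1 = b' from rfl]
    exact wirtinger_half2 _ _ _
  have habs : ∀ j k : Fin n, ‖w j * (w k ^ (a' + 2) * conj (w k) ^ b' * fderiv ℂ f (phiab (a' + 2) (b' + 1) w) (Pi.single k 1)) - w k * (w j ^ (a' + 2) * conj (w j) ^ b' * fderiv ℂ f (phiab (a' + 2) (b' + 1) w) (Pi.single j 1))‖ = ‖conj (w j) * (w k ^ (a' + 1) * conj (w k) ^ (b' + 1) * fderiv ℂ f (phiab (a' + 2) (b' + 1) w) (Pi.single k 1)) - conj (w k) * (w j ^ (a' + 1) * conj (w j) ^ (b' + 1) * fderiv ℂ f (phiab (a' + 2) (b' + 1) w) (Pi.single j 1))‖ := by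
    intro j k
    by_cases hj : w j = 0
    · rw [hj]
      simp [zero_pow]
    by_cases hk : w k = 0
    · rw [hk]
      simp [zero_pow]
    have key : conj (w j) * conj (w k) * (w j * (w k ^ (a' + 2) * conj (w k) ^ b' * fderiv ℂ f (phiab (a' + 2) (b' + 1) w) (Pi.single k 1)) - w k * (w j ^ (a' + 2) * conj (w j) ^ b' * fderiv ℂ f (phiab (a' + 2) (b' + 1) w) (Pi.single j 1))) = w j * w k * (conj (w j) * (w k ^ (a' + 1) * conj (w k) ^ (b' + 1) * fderiv ℂ f (phiab (a' + 2) (b' + 1) w) (Pi.single k 1)) - conj (w k) * (w j ^ (a' + 1) * conj (w j) ^ (b' + 1) * fderiv ℂ f (phiab (a' + 2) (b' + 1) w) (Pi.single j 1))) := by ring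
    have h2 := congrArg norm key
    simp only [norm_mul, Complex.norm_conj] at h2
    have hja : ‖w j‖ ≠ 0 := by simpa using hj
    have hka : ‖w k‖ ≠ 0 := by simpa using hk
    exact mul_left_cancel₀ (mul_ne_zero hja hka) h2
  have hK : (0 : ℝ) < ((a' : ℝ) + 2) ^ 2 - ((b' : ℝ) + 1) ^ 2 := by
    have hba : (b' : ℝ) ≤ (a' : ℝ) := by exact_mod_cast (by omega : b' ≤ a')
    nlinarith [Nat.cast_nonneg (α := ℝ) b']
  have hCjk : ∀ j k : Fin n, Cjk (fun w => f (phiab (a' + 2) (b' + 1) w)) w j k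
      = (((a' : ℝ) + 2) ^ 2 - ((b' : ℝ) + 1) ^ 2) * ‖conj (w j) * (w k ^ (a' + 1) * conj (w k) ^ (b' + 1) * fderiv ℂ f (phiab (a' + 2) (b' + 1) w) (Pi.single k 1)) - conj (w k) * (w j ^ (a' + 1) * conj (w j) ^ (b' + 1) * fderiv ℂ f (phiab (a' + 2) (b' + 1) w) (Pi.single j 1))‖ ^ 2 := by
    intro j k
    unfold Cjk
    rw [hwdz j, hwdz k, hwdzbar j, hwdzbar k]
    have e1 : conj (w j) * (((a' + 2 : ℕ) : ℂ) * w k ^ (a' + 1) * conj (w k) ^ (b' + 1) * fderiv ℂ f (phiab (a' + 2) (b' + 1) w) (Pi.single k 1))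
        - conj (w k) * (((a' + 2 : ℕ) : ℂ) * w j ^ (a' + 1) * conj (w j) ^ (b' + 1) * fderiv ℂ f (phiab (a' + 2) (b' + 1) w) (Pi.single j 1))
        = ((a' + 2 : ℕ) : ℂ) * (conj (w j) * (w k ^ (a' + 1) * conj (w k) ^ (b' + 1) * fderiv ℂ f (phiab (a' + 2) (b' + 1) w) (Pi.single k 1)) - conj (w k) * (w j ^ (a' + 1) * conj (w j) ^ (b' + 1) * fderiv ℂ f (phiab (a' + 2) (b' + 1) w) (Pi.single j 1))) := by push_cast; ring
    have e2 : w j * (((b' + 1 : ℕ) : ℂ) * w k ^ (a' + 2) * conj (w k) ^ b' * fderiv ℂ f (phiab (a' + 2) (b' + 1) w) (Pi.single k 1))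
        - w k * (((b' + 1 : ℕ) : ℂ) * w j ^ (a' + 2) * conj (w j) ^ b' * fderiv ℂ f (phiab (a' + 2) (b' + 1) w) (Pi.single j 1))
        = ((b' + 1 : ℕ) : ℂ) * (w j * (w k ^ (a' + 2) * conj (w k) ^ b' * fderiv ℂ f (phiab (a' + 2) (b' + 1) w) (Pi.single k 1)) - w k * (w j ^ (a' + 2) * conj (w j) ^ b' * fderiv ℂ f (phiab (a' + 2) (b' + 1) w) (Pi.single j 1))) := by push_cast; ring
    rw [e1, e2, norm_mul, norm_mul, Complex.norm_natCast, Complex.norm_natCast, habs j k]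
    push_cast
    ring
  have hex : ∃ j k : Fin n, j < k ∧ (conj (w j) * (w k ^ (a' + 1) * conj (w k) ^ (b' + 1) * fderiv ℂ f (phiab (a' + 2) (b' + 1) w) (Pi.single k 1)) - conj (w k) * (w j ^ (a' + 1) * conj (w j) ^ (b' + 1) * fderiv ℂ f (phiab (a' + 2) (b' + 1) w) (Pi.single j 1))) ≠ 0 := by
    by_contra hcon
    push_neg at hcon
    have hPall : ∀ j k : Fin n, (conj (w j) * (w k ^ (a' + 1) * conj (w k) ^ (b' + 1) * fderiv ℂ f (phiab (a' + 2) (b' + 1) w) (Pi.single k 1)) - conj (w k) * (w j ^ (a' + 1) * conj (w j) ^ (b' + 1) * fderiv ℂ f (phiab (a' + 2) (b' + 1) w) (Pi.single j 1))) = 0 := by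
      intro j k
      rcases lt_trichotomy j k with h | h | h
      · exact hcon j k h
      · subst h; ring
      · have h0 := hcon k j h; linear_combination -h0
    have heuler := euler f hf p d hhom (phiab (a' + 2) (b' + 1) w)
    rw [hgw, mul_zero] at heuler
    have hrel : ∀ j k : Fin n, (conj (w j) * w j) * (phiab (a' + 2) (b' + 1) w k * fderiv ℂ f (phiab (a' + 2) (b' + 1) w) (Pi.single k 1))
        = (conj (w k) * w k) * (phiab (a' + 2) (b' + 1) w j * fderiv ℂ f (phiab (a' + 2) (b' + 1) w) (Pi.single j 1)) := by
      intro j k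
      have h := hPall j k
      have hzj : phiab (a' + 2) (b' + 1) w j = w j ^ (a' + 2) * conj (w j) ^ (b' + 1) := rfl
      have hzk : phiab (a' + 2) (b' + 1) w k = w k ^ (a' + 2) * conj (w k) ^ (b' + 1) := rfl
      rw [hzj, hzk]
      linear_combination (w j * w k) * h
    obtain ⟨j0, hj0⟩ := Function.ne_iff.mp hw
    have hsum : (∑ j, (p j : ℂ) * (conj (w j) * w j)) * (phiab (a' + 2) (b' + 1) w j0 * fderiv ℂ f (phiab (a' + 2) (b' + 1) w) (Pi.single j0 1)) = 0 := by
      rw [Finset.sum_mul]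
      calc ∑ j, (p j : ℂ) * (conj (w j) * w j) * (phiab (a' + 2) (b' + 1) w j0 * fderiv ℂ f (phiab (a' + 2) (b' + 1) w) (Pi.single j0 1))
          = ∑ j, (p j : ℂ) * ((conj (w j0) * w j0) * (phiab (a' + 2) (b' + 1) w j * fderiv ℂ f (phiab (a' + 2) (b' + 1) w) (Pi.single j 1))) := by
            refine Finset.sum_congr rfl fun j _ => ?_
            rw [mul_assoc, hrel j j0]
        _ = (conj (w j0) * w j0) * ∑ j, (p j : ℂ) * (phiab (a' + 2) (b' + 1) w j * fderiv ℂ f (phiab (a' + 2) (b' + 1) w) (Pi.single j 1)) := by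
            rw [Finset.mul_sum]; exact Finset.sum_congr rfl fun j _ => by ring
        _ = 0 := by
            have h9 : ∑ j, (p j : ℂ) * (phiab (a' + 2) (b' + 1) w j * fderiv ℂ f (phiab (a' + 2) (b' + 1) w) (Pi.single j 1)) = 0 := by
              rw [← heuler]; exact Finset.sum_congr rfl fun j _ => by ring
            rw [h9, mul_zero]
    have hposs : (∑ j, (p j : ℂ) * (conj (w j) * w j)) ≠ 0 := by
      have hre : (∑ j, (p j : ℂ) * (conj (w j) * w j))
          = ((∑ j, (p j : ℝ) * Complex.normSq (w j) : ℝ) : ℂ) := by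
        push_cast
        refine Finset.sum_congr rfl fun j _ => ?_
        rw [show conj (w j) * w j = ((Complex.normSq (w j) : ℝ) : ℂ) from by
          rw [mul_comm, Complex.mul_conj]]
      rw [hre, Complex.ofReal_ne_zero]
      have hpos : 0 < ∑ j, (p j : ℝ) * Complex.normSq (w j) := by
        apply Finset.sum_pos'
        · intro j _
          exact mul_nonneg (Nat.cast_nonneg _) (Complex.normSq_nonneg _)
        · exact ⟨j0, Finset.mem_univ _,
            mul_pos (by exact_mod_cast hp j0) (Complex.normSq_pos.mpr hj0)⟩
      exact ne_of_gt hpos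
    have hz0F : phiab (a' + 2) (b' + 1) w j0 * fderiv ℂ f (phiab (a' + 2) (b' + 1) w) (Pi.single j0 1) = 0 := by
      rcases mul_eq_zero.mp hsum with h | h
      · exact absurd h hposs
      · exact h
    have hzne : ∀ j : Fin n, w j ≠ 0 → phiab (a' + 2) (b' + 1) w j ≠ 0 := by
      intro j hjne
      exact mul_ne_zero (pow_ne_zero _ hjne) (pow_ne_zero _ (by simpa using hjne))
    have hallzF : ∀ j, phiab (a' + 2) (b' + 1) w j * fderiv ℂ f (phiab (a' + 2) (b' + 1) w) (Pi.single j 1) = 0 := by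
      intro j
      have h := hrel j j0
      rw [hz0F, mul_zero] at h
      rcases mul_eq_zero.mp h.symm with h' | h'
      · exact absurd h' (mul_ne_zero (by simpa using hj0) hj0)
      · exact h'
    refine hcrit (Finset.univ.filter fun j => w j ≠ 0)
      ⟨j0, Finset.mem_filter.mpr ⟨Finset.mem_univ _, hj0⟩⟩
      ⟨phiab (a' + 2) (b' + 1) w, ?_, ?_, ?_⟩
    · intro j hj
      exact hzne j (Finset.mem_filter.mp hj).2
    · intro j hj
      have hje : w j = 0 := by simpa using hj
      show phiab (a' + 2) (b' + 1) w j = 0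
      rw [show phiab (a' + 2) (b' + 1) w j = w j ^ (a' + 2) * conj (w j) ^ (b' + 1) from rfl, hje]
      rw [zero_pow (by omega : a' + 2 ≠ 0)]
      ring
    · intro j hj
      have hjne : w j ≠ 0 := (Finset.mem_filter.mp hj).2
      rcases mul_eq_zero.mp (hallzF j) with h' | h'
      · exact absurd h' (hzne j hjne)
      · exact h'
  obtain ⟨j1, k1, hjk1, hPne⟩ := hex
  have hnonneg : ∀ j k : Fin n,
      0 ≤ if j < k then Cjk (fun w => f (phiab (a' + 2) (b' + 1) w)) w j k else 0 := by
    intro j k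
    by_cases h : j < k
    · rw [if_pos h, hCjk j k]
      exact mul_nonneg hK.le (sq_nonneg _)
    · rw [if_neg h]
  apply Finset.sum_pos'
  · intro j _
    exact Finset.sum_nonneg fun k _ => hnonneg j k
  · refine ⟨j1, Finset.mem_univ _,
      Finset.sum_pos' (fun k _ => hnonneg j1 k) ⟨k1, Finset.mem_univ _, ?_⟩⟩
    rw [if_pos hjk1, hCjk j1 k1]
    exact mul_pos hK (pow_pos (norm_pos_iff.mpr hPne) 2)
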